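/- Let Γ be a finite graph with vertex set V = {a₀, …, a_{n-1}}. Define the sequence u_{2ni+2j} = a_j^{4^i} and u_{2ni+2j+1} = a_j^{-2·4^i} for i ≥ 0, 0 ≤ j < n, and the sequence of subsets U₀ = V, U_{k+1} = (U_k ∪ U_k^{u_k}) △ {u_k, u_k^{-2}} ⊆ A(Γ). Then for every k ≥ 0, u_k ∈ U_k. -/

import Mathlib

open scoped commutatorElement

/-- The set of commutator relations of a right-angled Artin group on a graph. -/
def raagRels {α : Type*} (Γ : SimpleGraph α) : Set (FreeGroup α) :=
  {r | ∃ u v : α, Γ.Adj u v ∧ r = ⁅FreeGroup.of u, FreeGroup.of v⁆}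

/-- The right-angled Artin group on the graph `Γ`. -/
def Raag {α : Type*} (Γ : SimpleGraph α) : Type _ := PresentedGroup (raagRels Γ)

instance {α : Type*} (Γ : SimpleGraph α) : Group (Raag Γ) :=
  inferInstanceAs (Group (PresentedGroup (raagRels Γ)))

/-- The standard generator of `Raag Γ` corresponding to a vertex. -/
def Raag.of {α : Type*} (Γ : SimpleGraph α) (v : α) : Raag Γ := PresentedGroup.of v

/-- The commutation graph of a subset `X` of a group `G`. -/
def commGraph (G : Type*) [Group G] (X : Set G) : SimpleGraph X where
  Adj x y := x ≠ y ∧ Commute x.1 y.1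
  symm := ⟨fun _ _ ⟨h1, h2⟩ => ⟨h1.symm, h2.symm⟩⟩
  loopless := ⟨fun _ ⟨h1, _⟩ => h1 rfl⟩

/-- The natural homomorphism `A(CG(X)) → G` extending the identity on `X`. -/
def natHom (G : Type*) [Group G] (X : Set G) : Raag (commGraph G X) →* G :=
  PresentedGroup.toGroup (f := Subtype.val) (by
    rintro r ⟨u, v, hadj, rfl⟩
    rw [map_commutatorElement]
    simp only [FreeGroup.lift_apply_of]
    exact commutatorElement_eq_one_iff_commute.mpr hadj.2)

/-- The star of a vertex: vertices equal or adjacent to `v`. -/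
def starSet {α : Type*} (Γ : SimpleGraph α) (v : α) : Set α := {w | w = v ∨ Γ.Adj v w}

/-- The link of a vertex: vertices adjacent to `v`. -/
def linkSet {α : Type*} (Γ : SimpleGraph α) (v : α) : Set α := {w | Γ.Adj v w}

/-- The double of a graph `X` along the star of a vertex `v`:
two copies of the complement of the star, glued along the star. -/
def doubleStar {α : Type*} (X : SimpleGraph α) (v : α) :
    SimpleGraph ((Fin 2 × {w : α // w ∉ starSet X v}) ⊕ {w : α // w ∈ starSet X v}) where
  Adj a b :=
    match a, b with
    | .inl (i, x), .inl (j, y) => i = j ∧ X.Adj x.1 y.1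
    | .inl (_, x), .inr y => X.Adj x.1 y.1
    | .inr x, .inl (_, y) => X.Adj x.1 y.1
    | .inr x, .inr y => X.Adj x.1 y.1
  symm := by
    refine ⟨?_⟩
    rintro (⟨i, x⟩ | x) (⟨j, y⟩ | y) h
    · exact ⟨h.1.symm, h.2.symm⟩
    · exact h.symm
    · exact h.symm
    · exact h.symm
  loopless := by
    refine ⟨?_⟩
    rintro (⟨i, x⟩ | x) h
    · exact X.loopless.irrefl _ h.2
    · exact X.loopless.irrefl _ h

/-- The group element represented by a word (a list of letters with signs). -/
def wprod {α : Type*} (Γ : SimpleGraph α) (l : List (α × Bool)) : Raag Γ :=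
  (l.map fun p => if p.2 then Raag.of Γ p.1 else (Raag.of Γ p.1)⁻¹).prod

/-- The word length of an element of `Raag Γ` with respect to the vertex generators. -/
noncomputable def wordLength {α : Type*} (Γ : SimpleGraph α) (w : Raag Γ) : ℕ :=
  sInf {n | ∃ l : List (α × Bool), l.length = n ∧ wprod Γ l = w}

/-- A word is reduced if its length realizes the word length of the element it represents. -/
def WordReduced {α : Type*} (Γ : SimpleGraph α) (l : List (α × Bool)) : Prop :=
  l.length = wordLength Γ (wprod Γ l)

/-- The right-counting vector of a word: `rcv Γ l i` is the minimal word length of `y`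
such that the suffix of `l` from position `i` equals `x * sᵢ^{eᵢ} * y` with `x` in the
subgroup generated by the link of `sᵢ`. -/
noncomputable def rcv {α : Type*} (Γ : SimpleGraph α) (l : List (α × Bool))
    (i : Fin l.length) : ℕ :=
  sInf {m | ∃ x y : Raag Γ,
    x ∈ Subgroup.closure (Raag.of Γ '' linkSet Γ (l.get i).1) ∧
    wordLength Γ y = m ∧
    wprod Γ (l.drop i) = x * wprod Γ [l.get i] * y}

/-- The exponent used by the inflating map `σ` at position `i` of the word `l`. -/
noncomputable def sigmaExp {α : Type*} (Γ : SimpleGraph α) (M : ℕ) (l : List (α × Bool))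
    (i : Fin l.length) : ℤ :=
  if (l.get i).2 then (4 : ℤ) ^ (M - 1 - rcv Γ l i)
  else -2 * (4 : ℤ) ^ (M - 1 - rcv Γ l i)

/-- The inflating map `σ` applied to a word `l`, as an element of `Raag Γ`. -/
noncomputable def sigmaProd {α : Type*} (Γ : SimpleGraph α) (M : ℕ)
    (l : List (α × Bool)) : Raag Γ :=
  (List.ofFn fun i : Fin l.length => (Raag.of Γ (l.get i).1) ^ (sigmaExp Γ M l i)).prod

section UniversalSequence

variable {n : ℕ} (Γ : SimpleGraph (Fin n))

/-- The hypotheses defining the universal sequence `{(u_k, U_k)}`: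
`u_{2ni+2j} = a_j^{4^i}`, `u_{2ni+2j+1} = a_j^{-2·4^i}`, `U₀ = V`,
`U_{k+1} = (U_k ∪ U_k^{u_k}) △ {u_k, u_k⁻²}`. -/
def IsUniversalSequence (u : ℕ → Raag Γ) (U : ℕ → Set (Raag Γ)) : Prop :=
  (∀ (i : ℕ) (j : Fin n), u (2 * n * i + 2 * (j : ℕ)) = (Raag.of Γ j) ^ ((4 : ℤ) ^ i)) ∧
  (∀ (i : ℕ) (j : Fin n),
      u (2 * n * i + 2 * (j : ℕ) + 1) = (Raag.of Γ j) ^ (-(2 * (4 : ℤ) ^ i))) ∧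
  U 0 = Set.range (Raag.of Γ) ∧
  ∀ k, U (k + 1) =
    symmDiff (U k ∪ (fun x => (u k)⁻¹ * x * u k) '' U k) {u k, (u k) ^ (-2 : ℤ)}

end UniversalSequence



/-- Lamplighter-like group `(ℤ →₀ ℤ) ⋊ ℤ`. -/
structure LL where
  p : ℤ →₀ ℤ
  a : ℤ

namespace LL

def shift (a : ℤ) (q : ℤ →₀ ℤ) : ℤ →₀ ℤ := Finsupp.equivMapDomain (Equiv.addLeft a) q

@[simp] lemma shift_apply (a : ℤ) (q : ℤ →₀ ℤ) (x : ℤ) : shift a q x = q (-a + x) := rfl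

lemma shift_add (a : ℤ) (q r : ℤ →₀ ℤ) : shift a (q + r) = shift a q + shift a r := by
  ext x; simp

@[simp] lemma shift_zero (a : ℤ) : shift a (0 : ℤ →₀ ℤ) = 0 := by ext x; simp

lemma shift_shift (a b : ℤ) (q : ℤ →₀ ℤ) : shift a (shift b q) = shift (a + b) q := by
  ext x; simp only [shift_apply]; ring_nf

@[simp] lemma shift_zero' (q : ℤ →₀ ℤ) : shift 0 q = q := by ext x; simp

@[ext] lemma ext' {x y : LL} (h1 : x.p = y.p) (h2 : x.a = y.a) : x = y := by
  cases x; cases y; simp_all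

noncomputable instance : Group LL where
  mul x y := ⟨x.p + shift x.a y.p, x.a + y.a⟩
  one := ⟨0, 0⟩
  inv x := ⟨-(shift (-x.a) x.p), -x.a⟩
  mul_assoc x y z := by
    ext : 1
    · show (x.p + shift x.a y.p) + shift (x.a + y.a) z.p
        = x.p + shift x.a (y.p + shift y.a z.p)
      rw [shift_add, shift_shift, add_assoc]
    · exact add_assoc _ _ _
  one_mul x := by
    ext : 1
    · show (0 : ℤ →₀ ℤ) + shift 0 x.p = x.p; simp
    · exact zero_add _
  mul_one x := by
    ext : 1
    · show x.p + shift x.a 0 = x.p; simp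
    · exact add_zero _
  inv_mul_cancel x := by
    ext : 1
    · show -(shift (-x.a) x.p) + shift (-x.a) x.p = 0; simp
    · exact neg_add_cancel _

@[simp] lemma mul_def (x y : LL) : (x * y) = ⟨x.p + shift x.a y.p, x.a + y.a⟩ := rfl
@[simp] lemma one_def : (1 : LL) = ⟨0, 0⟩ := rfl

/-- If `⟨p,a⟩` commutes with `⟨0,e⟩`, `e ≠ 0`, then `p = 0`. -/
lemma p_eq_zero_of_commute {x : LL} {e : ℤ} (he : e ≠ 0)
    (h : x * ⟨0, e⟩ = (⟨0, e⟩ : LL) * x) : x.p = 0 := by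
  have hp : x.p = shift e x.p := by
    have h2 := congrArg LL.p h
    simpa using h2
  by_contra hne
  obtain ⟨x₀, hx₀⟩ := Finsupp.ne_iff.mp hne
  simp only [Finsupp.coe_zero, Pi.zero_apply] at hx₀
  have key : ∀ t : ℕ, x.p (x₀ + t * e) ≠ 0 := by
    intro t
    induction t with
    | zero => simpa using hx₀
    | succ s ih =>
      have h3 : x.p (x₀ + (↑(s+1) : ℤ) * e) = x.p (x₀ + (s:ℤ) * e) := by
        conv_lhs => rw [hp]
        simp only [shift_apply]
        congr 1
        push_cast
        ring
      rw [h3]; exact ih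
  have hinj : Function.Injective (fun t : ℕ => x₀ + t * e) := by
    intro s t hst
    simp only at hst
    have : (s : ℤ) = t := by
      have := mul_right_cancel₀ he (by linarith : (s:ℤ) * e = t * e)
      exact this
    exact_mod_cast this
  have hinf : (↑x.p.support : Set ℤ).Infinite :=
    Set.infinite_of_injective_forall_mem hinj
      (fun t => Finsupp.mem_support_iff.mpr (key t))
  exact hinf (x.p.support.finite_toSet)

/-- Sum-of-values homomorphism `LL →* Multiplicative ℤ`. -/
def μ : LL →* Multiplicative ℤ where
  toFun x := Multiplicative.ofAdd (x.p.sum fun _ v => v)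
  map_one' := by simp
  map_mul' x y := by
    simp only [mul_def, ← ofAdd_add]
    congr 1
    rw [Finsupp.sum_add_index (by simp) (by intros; rfl)]
    congr 1
    show (Finsupp.equivMapDomain (Equiv.addLeft x.a) y.p).sum (fun _ v => v) = _
    exact Finsupp.prod_equivMapDomain (N := Multiplicative ℤ) (Equiv.addLeft x.a) y.p (fun _ v => v)

/-- embedding of the base `ℤ`. -/
def ι : Multiplicative ℤ →* LL where
  toFun z := ⟨0, z.toAdd⟩
  map_one' := rfl
  map_mul' x y := by
    ext : 1
    · show (0 : ℤ →₀ ℤ) = 0 + shift _ 0; simp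
    · rfl

lemma Bpow (e : ℤ) : (⟨0, 1⟩ : LL) ^ e = ⟨0, e⟩ := by
  have h1 : (⟨0, 1⟩ : LL) = ι (Multiplicative.ofAdd 1) := rfl
  have h2 : (⟨0, e⟩ : LL) = ι (Multiplicative.ofAdd e) := rfl
  rw [h1, h2, ← map_zpow]
  congr 1
  rw [← ofAdd_zsmul]
  congr 1
  simp

/-- second coordinate hom -/
def ν : LL →* Multiplicative ℤ where
  toFun x := Multiplicative.ofAdd x.a
  map_one' := rfl
  map_mul' x y := rfl

end LL

section RaagLemmas

variable {α : Type*} [DecidableEq α] (Γ : SimpleGraph α)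

/-- Build a hom out of `Raag Γ` from commuting data. -/
def raagHom {G : Type*} [Group G] (f : α → G)
    (h : ∀ u v : α, Γ.Adj u v → Commute (f u) (f v)) : Raag Γ →* G :=
  PresentedGroup.toGroup (f := f) (by
    rintro r ⟨u, v, hadj, rfl⟩
    rw [map_commutatorElement]
    simp only [FreeGroup.lift_apply_of]
    exact commutatorElement_eq_one_iff_commute.mpr (h u v hadj))

@[simp] lemma raagHom_of {G : Type*} [Group G] (f : α → G)
    (h : ∀ u v : α, Γ.Adj u v → Commute (f u) (f v)) (v : α) :
    raagHom Γ f h (Raag.of Γ v) = f v :=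
  PresentedGroup.toGroup.of _

lemma raag_adj_commute {u v : α} (h : Γ.Adj u v) :
    Commute (Raag.of Γ u) (Raag.of Γ v) := by
  have h1 : (PresentedGroup.mk (raagRels Γ)) ⁅FreeGroup.of u, FreeGroup.of v⁆ = 1 := by
    apply (QuotientGroup.eq_one_iff _).mpr
    exact Subgroup.subset_normalClosure ⟨u, v, h, rfl⟩
  rw [map_commutatorElement] at h1
  exact commutatorElement_eq_one_iff_commute.mp h1

/-- The exponent-sum homomorphism for letter `j`. -/
def πh (j : α) : Raag Γ →* Multiplicative ℤ :=
  raagHom Γ (fun v => Multiplicative.ofAdd (if v = j then 1 else 0))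
    (fun _ _ _ => Commute.all _ _)

@[simp] lemma πh_of (j v : α) :
    πh Γ j (Raag.of Γ v) = Multiplicative.ofAdd (if v = j then 1 else 0) :=
  raagHom_of _ _ _ _

/-- The exponent sum of letter `j` in `x`. -/
def pexp (j : α) (x : Raag Γ) : ℤ := Multiplicative.toAdd (πh Γ j x)

@[simp] lemma pexp_of (j v : α) : pexp Γ j (Raag.of Γ v) = if v = j then 1 else 0 := by
  simp [pexp, πh]

@[simp] lemma pexp_mul (j : α) (x y : Raag Γ) :
    pexp Γ j (x * y) = pexp Γ j x + pexp Γ j y := by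
  simp [pexp]

@[simp] lemma pexp_one (j : α) : pexp Γ j 1 = 0 := by simp [pexp]

@[simp] lemma pexp_inv (j : α) (x : Raag Γ) : pexp Γ j x⁻¹ = -pexp Γ j x := by
  simp [pexp]

@[simp] lemma pexp_zpow (j : α) (x : Raag Γ) (e : ℤ) :
    pexp Γ j (x ^ e) = e * pexp Γ j x := by
  simp [pexp, toAdd_zpow]

lemma pexp_conj (j : α) (g x : Raag Γ) : pexp Γ j (g⁻¹ * x * g) = pexp Γ j x := by
  simp only [pexp_mul, pexp_inv]; ring

@[simp] lemma pexp_of_zpow (j v : α) (e : ℤ) :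
    pexp Γ j ((Raag.of Γ v) ^ e) = if v = j then e else 0 := by
  rw [pexp_zpow, pexp_of]
  split <;> ring

/-- Injectivity of pure powers. -/
lemma pure_power_inj {m m' : α} {e e' : ℤ} (he : e ≠ 0)
    (h : (Raag.of Γ m) ^ e = (Raag.of Γ m') ^ e') : m = m' ∧ e = e' := by
  have h1 := congrArg (pexp Γ m) h
  rw [pexp_of_zpow, pexp_of_zpow, if_pos rfl] at h1
  by_cases hmm : m = m'
  · subst hmm
    rw [if_pos rfl] at h1
    exact ⟨rfl, h1⟩
  · rw [if_neg (fun hh : m' = m => hmm hh.symm)] at h1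
    exact absurd h1 he

/-- Centralizer fact via the lamplighter representation: if `g` commutes with
`(of m)^e`, `e ≠ 0`, and `j` is not in the star of `m`, then the `j`-exponent
sum of `g` vanishes. -/
lemma pexp_eq_zero_of_conj_eq {m j : α} (hne : j ≠ m) (hnadj : ¬ Γ.Adj j m) {e : ℤ}
    (he : e ≠ 0) {g : Raag Γ} (h : g⁻¹ * (Raag.of Γ m) ^ e * g = (Raag.of Γ m) ^ e) :
    pexp Γ j g = 0 := by
  have hnadj' : ¬ Γ.Adj m j := fun hh => hnadj hh.symm
  set B : LL := ⟨0, 1⟩ with hB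
  set A : LL := ⟨Finsupp.single 0 1, 0⟩ with hA
  have hcomm : ∀ u v : α, Γ.Adj u v →
      Commute ((fun w => if w = j then A else if w = m then B else 1) u)
        ((fun w => if w = j then A else if w = m then B else 1) v) := by
    intro u v hadj
    simp only
    by_cases huj : u = j <;> by_cases hvj : v = j <;>
      by_cases hum : u = m <;> by_cases hvm : v = m <;>
      simp_all <;>
      first
        | exact Commute.refl _
        | exact Commute.one_left _
        | exact Commute.one_right _
        | exact absurd hadj (by subst_vars; assumption)
        | exact absurd hadj (Γ.loopless _ ∘ (by subst_vars; exact fun h => h))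
  set ψ : Raag Γ →* LL := raagHom Γ (fun w => if w = j then A else if w = m then B else 1) hcomm
    with hψ
  have hψm : ψ (Raag.of Γ m) = B := by
    rw [hψ, raagHom_of]
    simp [if_neg (fun hh : m = j => hne hh.symm)]
  have hBe : B ^ e = (⟨0, e⟩ : LL) := LL.Bpow e
  have heq : (ψ g)⁻¹ * (⟨0, e⟩ : LL) * ψ g = (⟨0, e⟩ : LL) := by
    have hc := congrArg ψ h
    simp only [map_mul, map_inv, map_zpow, hψm, hBe] at hc
    exact hc
  have key : ψ g * (⟨0, e⟩ : LL) = (⟨0, e⟩ : LL) * ψ g := by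
    conv_lhs => rw [← heq]
    group
  have hp : (ψ g).p = 0 := LL.p_eq_zero_of_commute he key
  have hμ : (LL.μ).comp ψ = πh Γ j := by
    refine PresentedGroup.ext fun v => ?_
    show LL.μ (ψ (Raag.of Γ v)) = πh Γ j (Raag.of Γ v)
    rw [hψ, raagHom_of, πh_of]
    by_cases hvj : v = j
    · rw [if_pos hvj, if_pos hvj]
      show Multiplicative.ofAdd ((Finsupp.single (0:ℤ) (1:ℤ)).sum fun _ v => v) = _
      rw [Finsupp.sum_single_index rfl]
    · rw [if_neg hvj, if_neg hvj]
      by_cases hvm : v = m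
      · rw [if_pos hvm]
        show Multiplicative.ofAdd ((0 : ℤ →₀ ℤ).sum fun _ v => v) = _
        rw [Finsupp.sum_zero_index]
      · rw [if_neg hvm, map_one]
        rfl
  have : πh Γ j g = LL.μ (ψ g) := by rw [← hμ]; rfl
  rw [pexp, this]
  show Multiplicative.toAdd (Multiplicative.ofAdd ((ψ g).p.sum fun _ v => v)) = 0
  rw [hp, Finsupp.sum_zero_index, toAdd_ofAdd]

end RaagLemmas

section Tables

/-- letter index at position `k`. -/
def jOfN (n k : ℕ) : ℕ := k % (2*n) / 2

/-- current exponent table. -/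
def eTab (n : ℕ) : ℕ → ℕ → ℤ
  | 0, _ => 1
  | k+1, j => if jOfN n k = j then -2 * eTab n k j else eTab n k j

/-- upper bound table for conjugator exponent sums. -/
def hiT (n : ℕ) : ℕ → ℕ → ℤ
  | 0, _ => 0
  | k+1, j => hiT n k j + max (if jOfN n k = j then eTab n k j else 0) 0

/-- lower bound table. -/
def loT (n : ℕ) : ℕ → ℕ → ℤ
  | 0, _ => 0
  | k+1, j => loT n k j + min (if jOfN n k = j then eTab n k j else 0) 0

lemma eTab_ne_zero (n : ℕ) : ∀ k j, eTab n k j ≠ 0 := by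
  intro k
  induction k with
  | zero => intro j; simp [eTab]
  | succ k ih =>
    intro j
    rw [eTab]
    split
    · intro hcon
      rcases mul_eq_zero.mp hcon with h | h
      · norm_num at h
      · exact ih j h
    · exact ih j

lemma loT_nonpos (n : ℕ) : ∀ k j, loT n k j ≤ 0 := by
  intro k
  induction k with
  | zero => intro j; simp [loT]
  | succ k ih =>
    intro j
    rw [loT]
    have h1 : min (if jOfN n k = j then eTab n k j else 0) 0 ≤ 0 := min_le_right _ _
    linarith [ih j]

lemma hiT_nonneg (n : ℕ) : ∀ k j, 0 ≤ hiT n k j := by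
  intro k
  induction k with
  | zero => intro j; simp [hiT]
  | succ k ih =>
    intro j
    rw [hiT]
    have h1 : (0:ℤ) ≤ max (if jOfN n k = j then eTab n k j else 0) 0 := le_max_right _ _
    linarith [ih j]

lemma loT_mono (n k j : ℕ) : loT n (k+1) j ≤ loT n k j := by
  rw [loT]
  have h1 : min (if jOfN n k = j then eTab n k j else 0) 0 ≤ 0 := min_le_right _ _
  linarith

lemma hiT_mono (n k j : ℕ) : hiT n k j ≤ hiT n (k+1) j := by
  rw [hiT]
  have h1 : (0:ℤ) ≤ max (if jOfN n k = j then eTab n k j else 0) 0 := le_max_right _ _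
  linarith

/-- closed forms -/
def Efm (i r j : ℕ) : ℤ := if 2*j+1 < r then 4^(i+1) else if 2*j < r then -2*4^i else 4^i
def Hfm (i r j : ℕ) : ℤ := 4^i - 1 + (if 2*j < r then 3*4^i else 0)
def Lfm (i r j : ℕ) : ℤ := -(2*(4^i - 1)) - (if 2*j+1 < r then 6*4^i else 0)

lemma table (n : ℕ) (hn : 0 < n) : ∀ k j, j < n →
    eTab n k j = Efm (k/(2*n)) (k%(2*n)) j ∧
    3 * hiT n k j = Hfm (k/(2*n)) (k%(2*n)) j ∧
    3 * loT n k j = Lfm (k/(2*n)) (k%(2*n)) j := by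
  intro k
  induction k with
  | zero =>
    intro j hj
    rw [Nat.zero_div, Nat.zero_mod]
    refine ⟨?_, ?_, ?_⟩ <;> simp [eTab, hiT, loT, Efm, Hfm, Lfm]
  | succ k ih =>
    intro j hj
    obtain ⟨he, hh, hl⟩ := ih j hj
    set i := k / (2*n) with hi
    set r := k % (2*n) with hr
    have hkeq : 2*n*i + r = k := Nat.div_add_mod k (2*n)
    have hrlt : r < 2*n := Nat.mod_lt _ (by omega)
    have hjof : jOfN n k = r / 2 := rfl
    have hq : (0:ℤ) < 4^i := by positivity
    have hq4 : (4:ℤ)^(i+1) = 4 * 4^i := by rw [pow_succ]; ring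
    have hdr := Nat.div_add_mod r 2
    unfold Efm at he
    unfold Hfm at hh
    unfold Lfm at hl
    by_cases hcase : r + 1 < 2*n
    · have hmod : (k+1) % (2*n) = r + 1 := by
        have hk1 : k + 1 = (r+1) + (2*n)*i := by omega
        rw [hk1, Nat.add_mul_mod_self_left, Nat.mod_eq_of_lt hcase]
      have hdiv : (k+1) / (2*n) = i := by
        have hk1 : k + 1 = (r+1) + (2*n)*i := by omega
        rw [hk1, Nat.add_mul_div_left _ _ (by omega : 0 < 2*n), Nat.div_eq_of_lt hcase]
        omega
      rw [hmod, hdiv, eTab, hiT, loT, hjof, he]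
      unfold Efm Hfm Lfm
      rw [max_def, min_def]
      refine ⟨?_, ?_, ?_⟩ <;>
        · split_ifs at he hh hl ⊢ <;> first | omega | linarith [hh, hl, hq, hq4]
    · have h2n : r + 1 = 2*n := by omega
      have hk1 : k + 1 = (2*n)*(i+1) := by rw [Nat.mul_succ]; omega
      have hmod : (k+1) % (2*n) = 0 := by rw [hk1]; exact Nat.mul_mod_right _ _
      have hdiv : (k+1) / (2*n) = i + 1 := by
        rw [hk1]; exact Nat.mul_div_cancel_left _ (by omega)
      rw [hmod, hdiv, eTab, hiT, loT, hjof, he]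
      unfold Efm Hfm Lfm
      rw [max_def, min_def]
      have hq44 : (4:ℤ)^(i+1+1) = 16 * 4^i := by rw [pow_succ, pow_succ]; ring
      refine ⟨?_, ?_, ?_⟩ <;>
        · split_ifs at he hh hl ⊢ <;> first | omega | linarith [hh, hl, hq, hq4, hq44]

end Tables

section Main

variable {n : ℕ} (Γ : SimpleGraph (Fin n))

lemma jOfN_lt (hn : 0 < n) (k : ℕ) : jOfN n k < n := by
  have h := Nat.mod_lt k (show 0 < 2*n by omega)
  unfold jOfN
  omega

/-- The value of `u k` in terms of the tables. -/
lemma u_spec (hn : 0 < n) {u : ℕ → Raag Γ} {U : ℕ → Set (Raag Γ)}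
    (huU : IsUniversalSequence Γ u U) (k : ℕ) :
    u k = (Raag.of Γ ⟨jOfN n k, jOfN_lt hn k⟩) ^ (eTab n k (jOfN n k)) := by
  set i := k / (2*n) with hi
  set r := k % (2*n) with hr
  have hkeq : 2*n*i + r = k := Nat.div_add_mod k (2*n)
  have hrlt : r < 2*n := Nat.mod_lt _ (by omega)
  have hdr := Nat.div_add_mod r 2
  have hr2 : r % 2 < 2 := Nat.mod_lt _ (by omega)
  have hjof : jOfN n k = r / 2 := rfl
  have hjlt := jOfN_lt hn k
  have hetab := (table n hn k (jOfN n k) hjlt).1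
  unfold Efm at hetab
  rw [hjof] at hetab hjlt
  rw [← hi, ← hr] at hetab
  show u k = Raag.of Γ ⟨r/2, hjlt⟩ ^ eTab n k (r/2)
  rcases (by omega : r % 2 = 0 ∨ r % 2 = 1) with hb | hb
  · have c1 : ¬ (2*(r/2)+1 < r) := by omega
    have c2 : ¬ (2*(r/2) < r) := by omega
    rw [if_neg c1, if_neg c2] at hetab
    have hk2 : 2*n*i + 2*(r/2) = k := by omega
    have h := huU.1 i ⟨r/2, hjlt⟩
    simp only at h
    rw [hk2] at h
    rw [h, hetab]
  · have c1 : ¬ (2*(r/2)+1 < r) := by omega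
    have c2 : 2*(r/2) < r := by omega
    rw [if_neg c1, if_pos c2] at hetab
    have hk2 : 2*n*i + 2*(r/2) + 1 = k := by omega
    have h := huU.2.1 i ⟨r/2, hjlt⟩
    simp only at h
    rw [hk2] at h
    rw [h, hetab]
    ring_nf

/-- The key arithmetic estimate. -/
lemma key_arith (hn : 0 < n) (k : ℕ) (z : ℤ)
    (h1 : loT n k (jOfN n k) ≤ z) (h2 : z ≤ hiT n k (jOfN n k)) :
    z + eTab n k (jOfN n k) ≠ 0 := by
  set i := k / (2*n) with hi
  set r := k % (2*n) with hr
  have hrlt : r < 2*n := Nat.mod_lt _ (by omega)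
  have hdr := Nat.div_add_mod r 2
  have hjof : jOfN n k = r / 2 := rfl
  have hjlt := Nat.div_lt_of_lt_mul (by omega : r < 2 * n) -- r/2 < n
  obtain ⟨he, hh, hl⟩ := table n hn k (r/2) (by omega)
  unfold Efm at he
  unfold Hfm at hh
  unfold Lfm at hl
  rw [← hi, ← hr] at he hh hl
  rw [hjof] at h1 h2 ⊢
  have hq : (0:ℤ) < 4^i := by positivity
  have c1 : ¬ (2*(r/2)+1 < r) := by omega
  rw [if_neg c1] at he hl
  rcases (by omega : r % 2 = 0 ∨ r % 2 = 1) with hb | hb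
  · have c2 : ¬ (2*(r/2) < r) := by omega
    rw [if_neg c2] at he hh
    rw [he]
    intro hcon
    linarith
  · have c2 : 2*(r/2) < r := by omega
    rw [if_pos c2] at he hh
    rw [he]
    intro hcon
    linarith

/-- The main invariant. -/
lemma main_inv (hn : 0 < n) {u : ℕ → Raag Γ} {U : ℕ → Set (Raag Γ)}
    (huU : IsUniversalSequence Γ u U) : ∀ k,
    (∀ (m : Fin n) (e : ℤ), e ≠ 0 →
      ((Raag.of Γ m) ^ e ∈ U k ↔ e = eTab n k m.val)) ∧
    (∀ x ∈ U k, ∃ (m : Fin n) (e : ℤ) (g : Raag Γ), e ≠ 0 ∧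
      x = g⁻¹ * (Raag.of Γ m) ^ e * g ∧
      ∀ j : Fin n, loT n k j.val ≤ pexp Γ j g ∧ pexp Γ j g ≤ hiT n k j.val) := by
  intro k
  induction k with
  | zero =>
    constructor
    · intro m e he
      rw [huU.2.2.1]
      constructor
      · rintro ⟨v, hv⟩
        have hv1 : (Raag.of Γ m) ^ e = (Raag.of Γ v) ^ (1:ℤ) := by rw [zpow_one, hv]
        exact (pure_power_inj Γ he hv1).2
      · intro h1
        have : eTab n 0 m.val = 1 := rfl
        rw [h1, this, zpow_one]
        exact ⟨m, rfl⟩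
    · intro x hx
      rw [huU.2.2.1] at hx
      obtain ⟨v, hv⟩ := hx
      refine ⟨v, 1, 1, one_ne_zero, by simp [hv.symm], fun j => ?_⟩
      simp [loT, hiT]
  | succ k ih =>
    obtain ⟨ih1, ih2⟩ := ih
    set j := jOfN n k with hj
    have hjlt : j < n := jOfN_lt hn k
    set jF : Fin n := ⟨j, hjlt⟩ with hjF
    set E := eTab n k j with hE
    have hE0 : E ≠ 0 := eTab_ne_zero n k j
    have hu : u k = (Raag.of Γ jF) ^ E := u_spec Γ hn huU k
    have hu2 : u k ^ (-2:ℤ) = (Raag.of Γ jF) ^ (-2*E) := by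
      rw [hu, ← zpow_mul]
      ring_nf
    have hUs := huU.2.2.2 k
    -- key claim about conjugated members
    have hconjmem : ∀ (m : Fin n) (e : ℤ), e ≠ 0 →
        (Raag.of Γ m) ^ e ∈ (fun x => (u k)⁻¹ * x * u k) '' U k → e = eTab n k m.val := by
      rintro m e he ⟨y, hyU, hyx⟩
      obtain ⟨m', e', g, he', hyform, hbounds⟩ := ih2 y hyU
      have hx : (Raag.of Γ m) ^ e = (g * u k)⁻¹ * (Raag.of Γ m') ^ e' * (g * u k) := by
        rw [← hyx, hyform]
        group
      have hm : m' = m ∧ e' = e := by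
        have hp1 := congrArg (pexp Γ m') hx
        rw [pexp_of_zpow] at hp1
        have hcj : pexp Γ m' ((g * u k)⁻¹ * (Raag.of Γ m') ^ e' * (g * u k)) = e' := by
          rw [pexp_conj, pexp_of_zpow, if_pos rfl]
        rw [hcj] at hp1
        by_cases hmm : m = m'
        · subst hmm
          rw [if_pos rfl] at hp1
          exact ⟨rfl, hp1.symm⟩
        · rw [if_neg hmm] at hp1
          exact absurd hp1.symm he'
      obtain ⟨hm1, hm2⟩ := hm
      rw [hm1, hm2] at hx
      by_cases hstar : jF = m ∨ Γ.Adj jF m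
      · have hcomm : Commute (u k) ((Raag.of Γ m) ^ e) := by
          rcases hstar with hh | hh
          · rw [hu, hh]; exact (Commute.refl _).zpow_zpow _ _
          · rw [hu]; exact (raag_adj_commute Γ hh).zpow_zpow _ _
        have hyeq : y = (Raag.of Γ m) ^ e := by
          have : (u k)⁻¹ * y * u k = (Raag.of Γ m) ^ e := hyx
          calc y = u k * ((u k)⁻¹ * y * u k) * (u k)⁻¹ := by group
          _ = u k * (Raag.of Γ m) ^ e * (u k)⁻¹ := by rw [this]
          _ = (Raag.of Γ m) ^ e * u k * (u k)⁻¹ := by rw [hcomm.eq]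
          _ = (Raag.of Γ m) ^ e := by group
        rw [hyeq] at hyU
        exact (ih1 m e he).mp hyU
      · push_neg at hstar
        obtain ⟨hne, hnadj⟩ := hstar
        have hcent : pexp Γ jF (g * u k) = 0 :=
          pexp_eq_zero_of_conj_eq Γ hne hnadj he hx.symm
        rw [pexp_mul, hu, pexp_of_zpow, if_pos rfl] at hcent
        have hb := hbounds jF
        exact absurd hcent (key_arith hn k (pexp Γ jF g) hb.1 hb.2)
    -- membership in the union
    have hA : ∀ (m : Fin n) (e : ℤ), e ≠ 0 →
        ((Raag.of Γ m) ^ e ∈ U k ∪ (fun x => (u k)⁻¹ * x * u k) '' U k ↔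
          e = eTab n k m.val) := by
      intro m e he
      constructor
      · rintro (h | h)
        · exact (ih1 m e he).mp h
        · exact hconjmem m e he h
      · intro h
        exact Or.inl ((ih1 m e he).mpr h)
    -- membership in the pair
    have hB : ∀ (m : Fin n) (e : ℤ), e ≠ 0 →
        ((Raag.of Γ m) ^ e ∈ ({u k, u k ^ (-2:ℤ)} : Set (Raag Γ)) ↔
          (m = jF ∧ (e = E ∨ e = -2*E))) := by
      intro m e he
      rw [Set.mem_insert_iff, Set.mem_singleton_iff, hu2, hu]
      constructor
      · rintro (h | h)
        · obtain ⟨h1, h2⟩ := pure_power_inj Γ he h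
          exact ⟨h1, Or.inl h2⟩
        · obtain ⟨h1, h2⟩ := pure_power_inj Γ he h
          exact ⟨h1, Or.inr h2⟩
      · rintro ⟨rfl, (rfl | rfl)⟩
        · exact Or.inl rfl
        · exact Or.inr rfl
    have henew : ∀ m : Fin n, eTab n (k+1) m.val =
        if j = m.val then -2 * eTab n k m.val else eTab n k m.val := by
      intro m; rfl
    constructor
    · -- Inv1 at k+1
      intro m e he
      have hAm := hA m e he
      have hBm := hB m e he
      rw [hUs, Set.mem_symmDiff, henew m, hAm, hBm]
      by_cases hmj : m = jF
      · have hjm : j = m.val := by rw [hmj]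
        rw [if_pos hjm]
        have hEm : eTab n k m.val = E := by rw [← hjm]
        rw [hEm]
        constructor
        · rintro (⟨h1, h2⟩ | ⟨⟨_, h1⟩, h2⟩)
          · exact absurd ⟨hmj, Or.inl h1⟩ h2
          · rcases h1 with h1 | h1
            · exact absurd h1 h2
            · exact h1
        · intro h
          refine Or.inr ⟨⟨hmj, Or.inr h⟩, fun hc => ?_⟩
          rw [h] at hc
          omega
      · have hjm : ¬ (j = m.val) := by
          intro hc
          exact hmj (Fin.ext hc.symm)
        rw [if_neg hjm]
        constructor
        · rintro (⟨h1, _⟩ | ⟨⟨h1, _⟩, _⟩)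
          · exact h1
          · exact absurd h1 hmj
        · intro h
          exact Or.inl ⟨h, fun hc => hmj hc.1⟩
    · -- Inv2 at k+1
      intro x hx
      rw [hUs] at hx
      rcases Set.mem_symmDiff.mp hx with ⟨hxA, _⟩ | ⟨hxB, _⟩
      · rcases hxA with hxU | hxC
        · obtain ⟨m, e, g, he, hform, hb⟩ := ih2 x hxU
          refine ⟨m, e, g, he, hform, fun j' => ?_⟩
          exact ⟨le_trans (loT_mono n k j'.val) (hb j').1,
            le_trans (hb j').2 (hiT_mono n k j'.val)⟩
        · obtain ⟨y, hyU, hyx⟩ := hxC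
          obtain ⟨m, e, g, he, hform, hb⟩ := ih2 y hyU
          refine ⟨m, e, g * u k, he, ?_, ?_⟩
          · rw [← hyx, hform]
            group
          · intro j'
            have hpu : pexp Γ j' (u k) = if jF = j' then E else 0 := by
              rw [hu, pexp_of_zpow]
            rw [pexp_mul, hpu]
            obtain ⟨hb1, hb2⟩ := hb j'
            have hloT : loT n (k+1) j'.val =
                loT n k j'.val + min (if jOfN n k = j'.val then eTab n k j'.val else 0) 0 := rfl
            have hhiT : hiT n (k+1) j'.val =
                hiT n k j'.val + max (if jOfN n k = j'.val then eTab n k j'.val else 0) 0 := rfl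
            by_cases hj' : jF = j'
            · have hjval : jOfN n k = j'.val := by rw [← hj']
              have hEj : eTab n k j'.val = E := by rw [← hjval]
              rw [if_pos hj', hloT, hhiT, if_pos hjval, hEj]
              constructor
              · have := min_le_left E 0
                linarith
              · have := le_max_left E 0
                linarith
            · have hjval : ¬ (jOfN n k = j'.val) := fun hc => hj' (Fin.ext hc)
              rw [if_neg hj', hloT, hhiT, if_neg hjval]
              rw [min_self, max_self]
              constructor <;> linarith
      · have hBmem : x = u k ∨ x = u k ^ (-2:ℤ) := hxB
        rcases hBmem with hx1 | hx1
        · refine ⟨jF, E, 1, hE0, ?_, fun j' => ?_⟩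
          · rw [hx1, hu]
            group
          · rw [pexp_one]
            exact ⟨loT_nonpos n (k+1) j'.val, hiT_nonneg n (k+1) j'.val⟩
        · refine ⟨jF, -2*E, 1, by omega, ?_, fun j' => ?_⟩
          · rw [hx1, hu2]
            group
          · rw [pexp_one]
            exact ⟨loT_nonpos n (k+1) j'.val, hiT_nonneg n (k+1) j'.val⟩

end Main

/-- for every `k`, `u_k ∈ U_k` in the universal sequence. -/
theorem useq_mem {n : ℕ} (hn : 0 < n) (Γ : SimpleGraph (Fin n))
    (u : ℕ → Raag Γ) (U : ℕ → Set (Raag Γ))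
    (huU : IsUniversalSequence Γ u U) :
    ∀ k, u k ∈ U k := by
  intro k
  have h1 := (main_inv Γ hn huU k).1
  rw [u_spec Γ hn huU k]
  exact (h1 ⟨jOfN n k, jOfN_lt hn k⟩ (eTab n k (jOfN n k))
    (eTab_ne_zero n k (jOfN n k))).mpr rfl
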